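/- Every tree admits a partition of its edge set into at most 2 classes such that each non-empty class induces a subgraph in which every vertex (of the induced subgraph) has odd degree. -/

import Mathlib

/-- The degree of vertex `v` in the color class `i` of the edge-coloring `c` of `G`. -/
noncomputable def classDeg {V : Type*} (G : SimpleGraph V) {k : ℕ}
    (c : Sym2 V → Fin k) (i : Fin k) (v : V) : ℕ :=
  {e : Sym2 V | e ∈ G.edgeSet ∧ c e = i ∧ v ∈ e}.ncard

/-- `G` is odd `k`-edge-colorable: there is an edge-coloring with `k` colors such that
every vertex incident to an edge of a color class has odd degree in that class. -/
def OddEdgeColorable {V : Type*} (G : SimpleGraph V) (k : ℕ) : Prop :=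
  ∃ c : Sym2 V → Fin k, ∀ (i : Fin k) (v : V),
    classDeg G c i v ≠ 0 → Odd (classDeg G c i v)

namespace TreeOddAux

open SimpleGraph Walk

variable {V : Type*} {G : SimpleGraph V}

/-- The unique path from `r` to `v` in a tree. -/
noncomputable def tp (hG : G.IsTree) (r v : V) : G.Walk r v :=
  (hG.existsUnique_path r v).choose

lemma tp_isPath (hG : G.IsTree) (r v : V) : (tp hG r v).IsPath :=
  (hG.existsUnique_path r v).choose_spec.1

lemma tp_eq (hG : G.IsTree) {r v : V} (q : G.Walk r v) (hq : q.IsPath) : q = tp hG r v :=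
  (hG.existsUnique_path r v).choose_spec.2 q hq

lemma tp_self (hG : G.IsTree) (r : V) : tp hG r r = Walk.nil :=
  (tp_eq hG Walk.nil Walk.IsPath.nil).symm

lemma tp_dichotomy [DecidableEq V] (hG : G.IsTree) (r : V) {v w : V} (h : G.Adj v w) :
    tp hG r w = (tp hG r v).concat h ∨ tp hG r v = (tp hG r w).concat h.symm := by
  by_cases hw : w ∈ (tp hG r v).support
  · right
    have hsp := (tp hG r v).take_spec hw
    have ht := (tp_isPath hG r v).takeUntil hw
    have hd := (tp_isPath hG r v).dropUntil hw
    have hsingle : (Walk.cons h.symm Walk.nil : G.Walk w v).IsPath := by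
      rw [Walk.cons_isPath_iff]
      exact ⟨Walk.IsPath.nil, by simp [h.ne']⟩
    have h1 : (tp hG r v).dropUntil w hw = Walk.cons h.symm Walk.nil :=
      (tp_eq hG _ hd).trans (tp_eq hG _ hsingle).symm
    have h2 : (tp hG r v).takeUntil w hw = tp hG r w := tp_eq hG _ ht
    rw [Walk.concat_eq_append, ← h2, ← h1]
    exact hsp.symm
  · left
    have hp : ((tp hG r v).concat h).IsPath := by
      rw [← Walk.isPath_reverse_iff, Walk.reverse_concat, Walk.cons_isPath_iff]
      refine ⟨(tp_isPath hG r v).reverse, ?_⟩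
      rw [Walk.support_reverse, List.mem_reverse]
      exact hw
    exact (tp_eq hG _ hp).symm

lemma tp_parent (hG : G.IsTree) {r v : V} (hv : v ≠ r) :
    ∃ (u : V) (h : G.Adj u v), tp hG r v = (tp hG r u).concat h := by
  obtain ⟨x, h', q, hq⟩ := Walk.exists_eq_cons_of_ne (Ne.symm hv) (tp hG r v)
  obtain ⟨y, q', h'', hc⟩ := Walk.exists_cons_eq_concat h' q
  have hp : (q'.concat h'').IsPath := by rw [← hc, ← hq]; exact tp_isPath hG r v
  have hq' : q'.IsPath := by
    rw [Walk.concat_eq_append] at hp; exact hp.of_append_left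
  exact ⟨y, h'', by rw [hq, hc, tp_eq hG q' hq']⟩

lemma concat_endpoint_eq {r v a b : V} {p : G.Walk r a} {q : G.Walk r b}
    {ha : G.Adj a v} {hb : G.Adj b v} (h : p.concat ha = q.concat hb) : a = b := by
  have hs : p.support.concat v = q.support.concat v := by
    rw [List.concat_eq_append, List.concat_eq_append, ← Walk.support_concat p ha, ← Walk.support_concat q hb, h]
  have hs2 : p.support = q.support := by
    rw [List.concat_eq_append, List.concat_eq_append] at hs
    exact List.append_cancel_right hs
  have h1 := Walk.getLast_support p
  have h2 := Walk.getLast_support q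
  rw [← h1, ← h2]
  congr 1

section FintypeV

open scoped Classical

variable [Fintype V]

/-- Number of even-degree vertices on the path from `r` to `v`. -/
noncomputable def evc (hG : G.IsTree) (r v : V) : ℕ :=
  (tp hG r v).support.countP (fun u => decide (Even (G.degree u)))

/-- The color associated to vertex `v`. -/
noncomputable def gc (hG : G.IsTree) (r v : V) : Fin 2 :=
  if Even (evc hG r v) then 0 else 1

/-- The edge coloring: an edge gets the color of its endpoint nearer to `r`. -/
noncomputable def colf (hG : G.IsTree) (r : V) : Sym2 V → Fin 2 :=
  Sym2.lift ⟨fun a b =>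
    if (tp hG r a).length < (tp hG r b).length then gc hG r a
    else if (tp hG r b).length < (tp hG r a).length then gc hG r b
    else 0, by
      intro a b
      dsimp only
      by_cases h1 : (tp hG r a).length < (tp hG r b).length
      · have h2 : ¬ (tp hG r b).length < (tp hG r a).length := by omega
        simp [h1, h2]
      · by_cases h2 : (tp hG r b).length < (tp hG r a).length
        · simp [h1, h2]
        · simp [h1, h2]⟩

lemma colf_concat (hG : G.IsTree) (r : V) {v w : V} (h : G.Adj v w)
    (hcon : tp hG r w = (tp hG r v).concat h) :
    colf hG r s(v, w) = gc hG r v := by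
  have hlen : (tp hG r w).length = (tp hG r v).length + 1 := by
    rw [hcon, Walk.length_concat]
  show Sym2.lift _ s(v, w) = _
  rw [Sym2.lift_mk]
  dsimp only
  rw [if_pos (by omega)]

lemma evc_concat (hG : G.IsTree) (r : V) {u v : V} (h : G.Adj u v)
    (hcon : tp hG r v = (tp hG r u).concat h) :
    evc hG r v = evc hG r u + (if Even (G.degree v) then 1 else 0) := by
  unfold evc
  rw [hcon, Walk.support_concat, List.countP_append]
  by_cases hv : Even (G.degree v) <;>
    simp [List.countP_cons, hv]

lemma ncard_neighborSet (v : V) : (G.neighborSet v).ncard = G.degree v := by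
  rw [Set.ncard_eq_toFinset_card', Set.toFinset_card, SimpleGraph.card_neighborSet_eq_degree]

lemma classDeg_eq (G : SimpleGraph V) (c : Sym2 V → Fin 2) (i : Fin 2) (v : V) :
    classDeg G c i v = {w | G.Adj v w ∧ c s(v, w) = i}.ncard := by
  have himg : {e : Sym2 V | e ∈ G.edgeSet ∧ c e = i ∧ v ∈ e}
      = (fun w => s(v, w)) '' {w | G.Adj v w ∧ c s(v, w) = i} := by
    ext e
    induction e with
    | _ a b =>
      constructor
      · rintro ⟨he, hc, hv⟩
        rw [SimpleGraph.mem_edgeSet] at he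
        rcases Sym2.mem_iff.mp hv with rfl | rfl
        · exact ⟨b, ⟨he, hc⟩, rfl⟩
        · exact ⟨a, ⟨he.symm, by rwa [Sym2.eq_swap]⟩, Sym2.eq_swap⟩
      · rintro ⟨w, ⟨hadj, hcw⟩, hee⟩
        have hee' : s(v, w) = s(a, b) := hee
        rw [← hee']
        exact ⟨hadj, hcw, Sym2.mem_mk_left v w⟩
  show Set.ncard _ = _
  rw [himg, Set.ncard_image_of_injective _ (fun a b hab => Sym2.congr_right.mp hab)]

lemma main (hG : G.IsTree) {r : V} (hr : G.degree r = 1) (i : Fin 2) (v : V)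
    (hne : {w | G.Adj v w ∧ colf hG r s(v, w) = i}.ncard ≠ 0) :
    Odd {w | G.Adj v w ∧ colf hG r s(v, w) = i}.ncard := by
  by_cases hvr : v = r
  · subst hvr
    have hall : ∀ w, G.Adj v w → colf hG v s(v, w) = gc hG v v := by
      intro w hw
      rcases tp_dichotomy hG v hw with hc | hc
      · exact colf_concat hG v hw hc
      · exfalso
        have hlen := congrArg Walk.length hc
        rw [tp_self, Walk.length_concat] at hlen
        simp at hlen
    by_cases hi : i = gc hG v v
    · have hS : {w | G.Adj v w ∧ colf hG v s(v, w) = i} = G.neighborSet v := by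
        ext w
        simp only [Set.mem_setOf_eq, SimpleGraph.mem_neighborSet]
        exact ⟨fun h => h.1, fun h => ⟨h, by rw [hall w h, hi]⟩⟩
      rw [hS, ncard_neighborSet, hr]
      exact odd_one
    · exfalso
      apply hne
      have hS : {w | G.Adj v w ∧ colf hG v s(v, w) = i} = ∅ := by
        ext w
        simp only [Set.mem_setOf_eq, Set.mem_empty_iff_false, iff_false, not_and]
        intro hadj hcol
        exact hi (hcol.symm.trans (hall w hadj))
      rw [hS, Set.ncard_empty]
  · obtain ⟨u, hu, hcon⟩ := tp_parent hG hvr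
    have hchild : ∀ w (h : G.Adj v w), w ≠ u → tp hG r w = (tp hG r v).concat h := by
      intro w h hwu
      rcases tp_dichotomy hG r h with hc | hc
      · exact hc
      · exact absurd (concat_endpoint_eq (hc.symm.trans hcon)) hwu
    have hcolchild : ∀ w (h : G.Adj v w), w ≠ u → colf hG r s(v, w) = gc hG r v :=
      fun w h hwu => colf_concat hG r h (hchild w h hwu)
    have hcolu : colf hG r s(v, u) = gc hG r u := by
      rw [Sym2.eq_swap]
      exact colf_concat hG r hu hcon
    have hpar := evc_concat hG r hu hcon
    have humem : u ∈ G.neighborSet v := hu.symm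
    have hdpos : 0 < G.degree v := (SimpleGraph.degree_pos_iff_exists_adj G v).mpr ⟨u, hu.symm⟩
    by_cases hdeg : Even (G.degree v)
    · have hpar1 : evc hG r v = evc hG r u + 1 := by rw [hpar, if_pos hdeg]
      have hne' : gc hG r v ≠ gc hG r u := by
        unfold gc
        rw [hpar1]
        by_cases he : Even (evc hG r u)
        · rw [if_neg (by simp [Nat.even_add_one, he]), if_pos he]
          decide
        · rw [if_pos (by simp [Nat.even_add_one, he]), if_neg he]
          decide
      have hcover : i = gc hG r v ∨ i = gc hG r u := by
        have htwo : ∀ a b c : Fin 2, a ≠ b → c = a ∨ c = b := by decide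
        exact htwo _ _ i hne'
      rcases hcover with rfl | rfl
      · have hS : {w | G.Adj v w ∧ colf hG r s(v, w) = gc hG r v}
            = G.neighborSet v \ {u} := by
          ext w
          simp only [Set.mem_setOf_eq, Set.mem_diff, SimpleGraph.mem_neighborSet,
            Set.mem_singleton_iff]
          constructor
          · rintro ⟨h1, h2⟩
            refine ⟨h1, ?_⟩
            rintro rfl
            exact hne' (h2.symm.trans hcolu)
          · rintro ⟨h1, h2⟩
            exact ⟨h1, hcolchild w h1 h2⟩
        rw [hS, Set.ncard_diff_singleton_of_mem humem, ncard_neighborSet]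
        obtain ⟨k, hk⟩ := hdeg
        exact ⟨k - 1, by omega⟩
      · have hS : {w | G.Adj v w ∧ colf hG r s(v, w) = gc hG r u} = {u} := by
          ext w
          simp only [Set.mem_setOf_eq, Set.mem_singleton_iff]
          constructor
          · rintro ⟨h1, h2⟩
            by_contra hwu
            exact hne' ((hcolchild w h1 hwu).symm.trans h2)
          · rintro rfl
            exact ⟨hu.symm, hcolu⟩
        rw [hS, Set.ncard_singleton]
        exact odd_one
    · have hpar0 : evc hG r v = evc hG r u := by rw [hpar, if_neg hdeg]; omega
      have heq : gc hG r v = gc hG r u := by unfold gc; rw [hpar0]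
      have hall : ∀ w, G.Adj v w → colf hG r s(v, w) = gc hG r v := by
        intro w h
        by_cases hwu : w = u
        · subst hwu
          rw [hcolu, heq]
        · exact hcolchild w h hwu
      by_cases hi : i = gc hG r v
      · have hS : {w | G.Adj v w ∧ colf hG r s(v, w) = i} = G.neighborSet v := by
          ext w
          simp only [Set.mem_setOf_eq, SimpleGraph.mem_neighborSet]
          exact ⟨fun h => h.1, fun h => ⟨h, by rw [hall w h, hi]⟩⟩
        rw [hS, ncard_neighborSet]
        exact Nat.not_even_iff_odd.mp hdeg
      · exfalso
        apply hne
        have hS : {w | G.Adj v w ∧ colf hG r s(v, w) = i} = ∅ := by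
          ext w
          simp only [Set.mem_setOf_eq, Set.mem_empty_iff_false, iff_false, not_and]
          intro hadj hcol
          exact hi (hcol.symm.trans (hall w hadj))
        rw [hS, Set.ncard_empty]

end FintypeV

end TreeOddAux

/-- Every tree is odd 2-edge-colorable. -/
theorem stmt1 {V : Type*} [Fintype V] (G : SimpleGraph V) (hG : G.IsTree) :
    OddEdgeColorable G 2 := by
  classical
  by_cases hE : ∃ a b : V, G.Adj a b
  · obtain ⟨a0, b0, hab⟩ := hE
    have hleaf : ∃ r : V, G.degree r = 1 := by
      by_contra hno
      push_neg at hno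
      have hpos : ∀ v : V, 0 < G.degree v := by
        intro v
        rw [SimpleGraph.degree_pos_iff_exists_adj]
        by_cases hva : v = a0
        · subst hva; exact ⟨b0, hab⟩
        · obtain ⟨p⟩ := hG.isConnected.preconnected v a0
          cases p with
          | nil => exact absurd rfl hva
          | cons h q => exact ⟨_, h⟩
      have h2 : ∀ v : V, 2 ≤ G.degree v := by
        intro v
        have := hpos v
        have := hno v
        omega
      have hcard := hG.card_edgeFinset
      have hsum := SimpleGraph.sum_degrees_eq_twice_card_edges G
      have hle : 2 * Fintype.card V ≤ ∑ v : V, G.degree v := by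
        calc 2 * Fintype.card V = ∑ _v : V, 2 := by
              simp [Finset.sum_const, Finset.card_univ, mul_comm]
          _ ≤ ∑ v : V, G.degree v := Finset.sum_le_sum (fun v _ => h2 v)
      have hVpos : 0 < Fintype.card V := Fintype.card_pos_iff.mpr hG.isConnected.nonempty
      omega
    obtain ⟨r, hr⟩ := hleaf
    refine ⟨TreeOddAux.colf hG r, fun i v h => ?_⟩
    rw [TreeOddAux.classDeg_eq] at h ⊢
    exact TreeOddAux.main hG hr i v h
  · push_neg at hE
    refine ⟨fun _ => 0, fun i v h => absurd ?_ h⟩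
    have hS : {e : Sym2 V | e ∈ G.edgeSet ∧ (fun _ => (0 : Fin 2)) e = i ∧ v ∈ e} = ∅ := by
      ext e
      induction e with
      | _ a b =>
        simp only [Set.mem_setOf_eq, Set.mem_empty_iff_false, iff_false, not_and]
        intro he
        exact absurd (G.mem_edgeSet.mp he) (hE a b)
    show Set.ncard _ = 0
    rw [hS, Set.ncard_empty]
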